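/- Inversion of the Sinkhorn potential (second part of the inversion lemma): assume the kernel matrix K = (exp(−c_{ij}/2))_{i,j} is positive definite. Let f ∈ F := {∇Ω(α) : α ∈ △^d} be a symmetric Sinkhorn potential. Then Ω_C^*(f) = 0 (equivalently min_{α∈△^d} Φ_C(α,f) = 1) and ∇Ω(g-softmax(f)) = f. -/

import Mathlib

open Finset Real Filter

noncomputable section

/-- The probability simplex in `ℝ^d`. -/
def simplexS (d : ℕ) : Set (Fin d → ℝ) := stdSimplex ℝ (Fin d)


open scoped Classical

/-- `Φ_C(α,f) = Σ_{i,j} α_i α_j exp(-(f_i + f_j + c_{ij})/2)`. -/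
def Phi {d : ℕ} (C : Matrix (Fin d) (Fin d) ℝ) (α f : Fin d → ℝ) : ℝ :=
  ∑ i, ∑ j, α i * α j * Real.exp (-(f i + f j + C i j) / 2)

/-- The geometric log-sum-exp `Ω_C^*(f) = -log min_{α ∈ △^d} Φ_C(α, f)`. -/
def OmegaStar {d : ℕ} (C : Matrix (Fin d) (Fin d) ℝ) (f : Fin d → ℝ) : ℝ :=
  -Real.log (sInf ((fun α => Phi C α f) '' simplexS d))

/-- The geometric softmax: the (unique, when the kernel is positive definite) minimizer of
`Φ_C(·, f)` over the simplex. -/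
def gsoftmax {d : ℕ} (C : Matrix (Fin d) (Fin d) ℝ) (f : Fin d → ℝ) : Fin d → ℝ :=
  if h : ∃ α ∈ simplexS d, IsMinOn (fun β => Phi C β f) (simplexS d) α
  then h.choose else fun _ => 0

/-- The soft C-transform `T(f,α)_i = -2 log Σ_j α_j exp((f_j - c_{ij})/2)`. -/
def Tsoft {d : ℕ} (C : Matrix (Fin d) (Fin d) ℝ) (f α : Fin d → ℝ) : Fin d → ℝ :=
  fun i => -2 * Real.log (∑ j, α j * Real.exp ((f j - C i j) / 2))

/-- `f` is the symmetric Sinkhorn potential of `α`: `-f = T(-f, α)`. -/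
def IsSinkhornPotential {d : ℕ} (C : Matrix (Fin d) (Fin d) ℝ) (α f : Fin d → ℝ) : Prop :=
  -f = Tsoft C (-f) α

/-- The symmetric Sinkhorn potential `∇Ω(α)`: the (unique, when the kernel is positive
definite) `f` with `-f = T(-f, α)`. -/
def gradOmega {d : ℕ} (C : Matrix (Fin d) (Fin d) ℝ) (α : Fin d → ℝ) : Fin d → ℝ :=
  if h : ∃ f : Fin d → ℝ, IsSinkhornPotential C α f then h.choose else fun _ => 0

/-- The extrapolation `f^E = -T(-(f - Ω_C^*(f)·1), g-softmax(f)) + Ω_C^*(f)·1`. -/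
def extrap {d : ℕ} (C : Matrix (Fin d) (Fin d) ℝ) (f : Fin d → ℝ) : Fin d → ℝ :=
  fun i => -(Tsoft C (fun j => -(f j - OmegaStar C f)) (gsoftmax C f) i) + OmegaStar C f

/-- The kernel matrix `K = (exp(-c_{ij}/2))_{ij}`. -/
def kernelK {d : ℕ} (C : Matrix (Fin d) (Fin d) ℝ) : Matrix (Fin d) (Fin d) ℝ :=
  Matrix.of fun i j => Real.exp (-(C i j) / 2)


section AuxLemmas

open Matrix

variable {d : ℕ} (C : Matrix (Fin d) (Fin d) ℝ)

lemma kquad_eq (w : Fin d → ℝ) :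
    dotProduct (star w) (kernelK C *ᵥ w) = ∑ i, ∑ j, w i * w j * Real.exp (-(C i j) / 2) := by
  simp only [dotProduct, Matrix.mulVec, star_trivial, kernelK, Matrix.of_apply, Finset.mul_sum]
  exact Finset.sum_congr rfl fun i _ => Finset.sum_congr rfl fun j _ => by ring

lemma kquad_nonneg (hK : (kernelK C).PosDef) (w : Fin d → ℝ) :
    0 ≤ ∑ i, ∑ j, w i * w j * Real.exp (-(C i j) / 2) := by
  rw [← kquad_eq]; exact hK.posSemidef.dotProduct_mulVec_nonneg w

lemma kquad_pos (hK : (kernelK C).PosDef) (w : Fin d → ℝ) (hw : w ≠ 0) :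
    0 < ∑ i, ∑ j, w i * w j * Real.exp (-(C i j) / 2) := by
  rw [← kquad_eq]; exact hK.dotProduct_mulVec_pos hw

lemma fquad_eq (f x : Fin d → ℝ) :
    ∑ i, ∑ j, x i * x j * Real.exp (-(f i + f j + C i j) / 2)
      = ∑ i, ∑ j, (x i * Real.exp (-(f i) / 2)) * (x j * Real.exp (-(f j) / 2))
          * Real.exp (-(C i j) / 2) := by
  refine Finset.sum_congr rfl fun i _ => Finset.sum_congr rfl fun j _ => ?_
  rw [show -(f i + f j + C i j) / 2 = -(f i) / 2 + (-(f j) / 2 + -(C i j) / 2) from by ring,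
    Real.exp_add, Real.exp_add]
  ring

lemma fquad_nonneg (hK : (kernelK C).PosDef) (f x : Fin d → ℝ) :
    0 ≤ ∑ i, ∑ j, x i * x j * Real.exp (-(f i + f j + C i j) / 2) := by
  rw [fquad_eq]; exact kquad_nonneg C hK _

lemma fquad_pos (hK : (kernelK C).PosDef) (f : Fin d → ℝ) (x : Fin d → ℝ) (hx : x ≠ 0) :
    0 < ∑ i, ∑ j, x i * x j * Real.exp (-(f i + f j + C i j) / 2) := by
  rw [fquad_eq]
  refine kquad_pos C hK _ ?_
  intro h0
  apply hx
  funext i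
  have := congrFun h0 i
  simp only [Pi.zero_apply, mul_eq_zero] at this
  rcases this with h | h
  · exact h
  · exact absurd h (Real.exp_ne_zero _)

/-- Key identity satisfied by a Sinkhorn potential. -/
lemma pot_S {α g : Fin d → ℝ} (hα : α ∈ simplexS d)
    (hg : IsSinkhornPotential C α g) (i : Fin d) :
    ∑ j, α j * Real.exp ((-g j - C i j) / 2) = Real.exp (g i / 2) := by
  have hS : 0 < ∑ j, α j * Real.exp ((-g j - C i j) / 2) := by
    obtain ⟨j₀, hj₀⟩ : ∃ j, 0 < α j := by
      by_contra h
      push_neg at h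
      have : ∑ j, α j = 0 := Finset.sum_eq_zero fun j _ => le_antisymm (h j) (hα.1 j)
      rw [hα.2] at this; norm_num at this
    refine Finset.sum_pos' (fun j _ => mul_nonneg (hα.1 j) (Real.exp_pos _).le) ?_
    exact ⟨j₀, Finset.mem_univ _, mul_pos hj₀ (Real.exp_pos _)⟩
  have h1 := congrFun hg i
  simp only [Pi.neg_apply, Tsoft] at h1
  have h2 : Real.log (∑ j, α j * Real.exp ((-g j - C i j) / 2)) = g i / 2 := by linarith
  calc ∑ j, α j * Real.exp ((-g j - C i j) / 2)
      = Real.exp (Real.log (∑ j, α j * Real.exp ((-g j - C i j) / 2))) := (Real.exp_log hS).symm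
    _ = Real.exp (g i / 2) := by rw [h2]

/-- One-identity for a Sinkhorn potential. -/
lemma pot_one {α g : Fin d → ℝ} (hα : α ∈ simplexS d)
    (hg : IsSinkhornPotential C α g) (i : Fin d) :
    ∑ j, α j * Real.exp (-(g i + g j + C i j) / 2) = 1 := by
  have h1 : ∑ j, α j * Real.exp (-(g i + g j + C i j) / 2)
      = Real.exp (-(g i) / 2) * ∑ j, α j * Real.exp ((-g j - C i j) / 2) := by
    rw [Finset.mul_sum]
    refine Finset.sum_congr rfl fun j _ => ?_
    rw [mul_left_comm, ← Real.exp_add]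
    have : -(g i) / 2 + (-g j - C i j) / 2 = -(g i + g j + C i j) / 2 := by ring
    rw [this]
  rw [h1, pot_S C hα hg, ← Real.exp_add,
    show -(g i) / 2 + g i / 2 = 0 from by ring, Real.exp_zero]

end AuxLemmas

/-- Inversion of the Sinkhorn potential (second part): if `f` is a symmetric Sinkhorn
potential of some `α ∈ △^d`, then `Ω_C^*(f) = 0` (equivalently
`min_{α ∈ △^d} Φ_C(α,f) = 1`) and `∇Ω(g-softmax(f)) = f`. -/
theorem sinkhorn_potential_inversion_second (d : ℕ) (hd : 1 ≤ d)
    (C : Matrix (Fin d) (Fin d) ℝ) (hCsym : C.IsSymm) (hCdiag : ∀ i, C i i = 0)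
    (hK : (kernelK C).PosDef) (f : Fin d → ℝ)
    (hf : ∃ α ∈ simplexS d, IsSinkhornPotential C α f) :
    OmegaStar C f = 0 ∧
    sInf ((fun α => Phi C α f) '' simplexS d) = 1 ∧
    gradOmega C (gsoftmax C f) = f := by
  classical
  obtain ⟨α, hα, hpot⟩ := hf
  have hone : ∀ i, ∑ j, α j * Real.exp (-(f i + f j + C i j) / 2) = 1 :=
    pot_one C hα hpot
  have hone' : ∀ j, ∑ i, α i * Real.exp (-(f i + f j + C i j) / 2) = 1 := by
    intro j
    rw [← hone j]
    refine Finset.sum_congr rfl fun i _ => ?_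
    rw [show -(f i + f j + C i j) / 2 = -(f j + f i + C j i) / 2 by
      rw [hCsym.apply i j]; ring]
  have hPhiα : Phi C α f = 1 := by
    unfold Phi
    calc ∑ i, ∑ j, α i * α j * Real.exp (-(f i + f j + C i j) / 2)
        = ∑ i, α i * ∑ j, α j * Real.exp (-(f i + f j + C i j) / 2) := by
          refine Finset.sum_congr rfl fun i _ => ?_
          rw [Finset.mul_sum]
          exact Finset.sum_congr rfl fun j _ => by ring
      _ = ∑ i, α i := by
          refine Finset.sum_congr rfl fun i _ => by rw [hone i, mul_one]
      _ = 1 := hα.2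
  -- expansion of Phi around α
  have hexp : ∀ β : Fin d → ℝ, (∑ i, β i = 1) →
      Phi C β f = 1 + ∑ i, ∑ j, (β i - α i) * (β j - α j)
        * Real.exp (-(f i + f j + C i j) / 2) := by
    intro β hβ1
    have e1 : ∑ i, ∑ j, β i * (α j * Real.exp (-(f i + f j + C i j) / 2)) = 1 := by
      calc ∑ i, ∑ j, β i * (α j * Real.exp (-(f i + f j + C i j) / 2))
          = ∑ i, β i * ∑ j, α j * Real.exp (-(f i + f j + C i j) / 2) := by
            exact Finset.sum_congr rfl fun i _ => (Finset.mul_sum _ _ _).symm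
        _ = ∑ i, β i := Finset.sum_congr rfl fun i _ => by rw [hone i, mul_one]
        _ = 1 := hβ1
    have e2 : ∑ i, ∑ j, α i * (β j * Real.exp (-(f i + f j + C i j) / 2)) = 1 := by
      rw [Finset.sum_comm]
      calc ∑ j, ∑ i, α i * (β j * Real.exp (-(f i + f j + C i j) / 2))
          = ∑ j, β j * ∑ i, α i * Real.exp (-(f i + f j + C i j) / 2) := by
            refine Finset.sum_congr rfl fun j _ => ?_
            rw [Finset.mul_sum]
            exact Finset.sum_congr rfl fun i _ => by ring
        _ = ∑ j, β j := Finset.sum_congr rfl fun j _ => by rw [hone' j, mul_one]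
        _ = 1 := hβ1
    have e3 : ∑ i, ∑ j, α i * (α j * Real.exp (-(f i + f j + C i j) / 2)) = 1 := by
      calc ∑ i, ∑ j, α i * (α j * Real.exp (-(f i + f j + C i j) / 2))
          = ∑ i, α i * ∑ j, α j * Real.exp (-(f i + f j + C i j) / 2) := by
            exact Finset.sum_congr rfl fun i _ => (Finset.mul_sum _ _ _).symm
        _ = ∑ i, α i := Finset.sum_congr rfl fun i _ => by rw [hone i, mul_one]
        _ = 1 := hα.2
    have expand : ∑ i, ∑ j, (β i - α i) * (β j - α j) * Real.exp (-(f i + f j + C i j) / 2)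
        = Phi C β f
          - ∑ i, ∑ j, β i * (α j * Real.exp (-(f i + f j + C i j) / 2))
          - ∑ i, ∑ j, α i * (β j * Real.exp (-(f i + f j + C i j) / 2))
          + ∑ i, ∑ j, α i * (α j * Real.exp (-(f i + f j + C i j) / 2)) := by
      unfold Phi
      rw [show (∑ i, ∑ j, (β i - α i) * (β j - α j) * Real.exp (-(f i + f j + C i j) / 2))
          = ∑ i, ∑ j, (β i * β j * Real.exp (-(f i + f j + C i j) / 2)
              - β i * (α j * Real.exp (-(f i + f j + C i j) / 2))
              - α i * (β j * Real.exp (-(f i + f j + C i j) / 2))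
              + α i * (α j * Real.exp (-(f i + f j + C i j) / 2))) from
        Finset.sum_congr rfl fun i _ => Finset.sum_congr rfl fun j _ => by ring]
      simp only [Finset.sum_add_distrib, Finset.sum_sub_distrib]
    rw [expand, e1, e2, e3]
    ring
  -- the minimum bound
  have hmin : ∀ β ∈ simplexS d, 1 ≤ Phi C β f := by
    intro β hβ
    rw [hexp β hβ.2]
    have := fquad_nonneg C hK f (fun i => β i - α i)
    linarith
  -- sInf = 1
  have hmem : (1 : ℝ) ∈ (fun α => Phi C α f) '' simplexS d := ⟨α, hα, hPhiα⟩
  have hlb : ∀ y ∈ (fun α => Phi C α f) '' simplexS d, 1 ≤ y := by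
    rintro y ⟨β, hβ, rfl⟩
    exact hmin β hβ
  have hsInf : sInf ((fun α => Phi C α f) '' simplexS d) = 1 :=
    le_antisymm (csInf_le ⟨1, hlb⟩ hmem) (le_csInf ⟨1, hmem⟩ hlb)
  have hOmega : OmegaStar C f = 0 := by
    rw [OmegaStar, hsInf, Real.log_one, neg_zero]
  -- gsoftmax C f = α
  have hminOn : IsMinOn (fun β => Phi C β f) (simplexS d) α := by
    intro β hβ
    simp only [Set.mem_setOf_eq, hPhiα]
    exact hmin β hβ
  have hex : ∃ γ ∈ simplexS d, IsMinOn (fun β => Phi C β f) (simplexS d) γ := ⟨α, hα, hminOn⟩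
  have hgs : gsoftmax C f = α := by
    rw [gsoftmax, dif_pos hex]
    obtain ⟨h1, h2⟩ := hex.choose_spec
    set β := hex.choose with hβdef
    have hle : Phi C β f ≤ 1 := by
      have := isMinOn_iff.mp h2 α hα
      simpa [hPhiα] using this
    have hge := hmin β h1
    have heq : Phi C β f = 1 := le_antisymm hle hge
    have hq : ∑ i, ∑ j, (β i - α i) * (β j - α j) * Real.exp (-(f i + f j + C i j) / 2) = 0 := by
      have := hexp β h1.2
      linarith
    by_contra hne
    have hx : (fun i => β i - α i) ≠ 0 := by
      intro h0
      apply hne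
      funext i
      have := congrFun h0 i
      simp only [Pi.zero_apply] at this
      linarith
    exact (fquad_pos C hK f _ hx).ne' hq
  rw [hgs]
  refine ⟨hOmega, hsInf, ?_⟩
  -- gradOmega C α = f via uniqueness of the Sinkhorn potential
  have hexg : ∃ g : Fin d → ℝ, IsSinkhornPotential C α g := ⟨f, hpot⟩
  have huniq : ∀ g : Fin d → ℝ, IsSinkhornPotential C α g → g = f := by
    intro g hg
    set u : Fin d → ℝ := fun i => Real.exp (-(f i) / 2) with hu_def
    set v : Fin d → ℝ := fun i => Real.exp (-(g i) / 2) with hv_def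
    have hu0 : ∀ i, 0 < u i := fun i => Real.exp_pos _
    have hv0 : ∀ i, 0 < v i := fun i => Real.exp_pos _
    have hu : ∀ i, ∑ j, α j * (u j * Real.exp (-(C i j) / 2)) = (u i)⁻¹ := by
      intro i
      have h1 : ∑ j, α j * Real.exp ((-f j - C i j) / 2) = Real.exp (f i / 2) :=
        pot_S C hα hpot i
      have h2 : ∀ j, α j * (u j * Real.exp (-(C i j) / 2))
          = α j * Real.exp ((-f j - C i j) / 2) := by
        intro j
        rw [hu_def]
        rw [← Real.exp_add]
        congr 2
        ring
      rw [Finset.sum_congr rfl fun j _ => h2 j, h1, hu_def, ← Real.exp_neg]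
      congr 1
      ring
    have hv : ∀ i, ∑ j, α j * (v j * Real.exp (-(C i j) / 2)) = (v i)⁻¹ := by
      intro i
      have h1 : ∑ j, α j * Real.exp ((-g j - C i j) / 2) = Real.exp (g i / 2) :=
        pot_S C hα hg i
      have h2 : ∀ j, α j * (v j * Real.exp (-(C i j) / 2))
          = α j * Real.exp ((-g j - C i j) / 2) := by
        intro j
        rw [hv_def]
        rw [← Real.exp_add]
        congr 2
        ring
      rw [Finset.sum_congr rfl fun j _ => h2 j, h1, hv_def, ← Real.exp_neg]
      congr 1
      ring
    set w : Fin d → ℝ := fun i => α i * (u i - v i) with hw_def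
    have hinner : ∀ i, ∑ j, w j * Real.exp (-(C i j) / 2) = (u i)⁻¹ - (v i)⁻¹ := by
      intro i
      calc ∑ j, w j * Real.exp (-(C i j) / 2)
          = ∑ j, (α j * (u j * Real.exp (-(C i j) / 2))
              - α j * (v j * Real.exp (-(C i j) / 2))) := by
            exact Finset.sum_congr rfl fun j _ => by rw [hw_def]; ring
        _ = (∑ j, α j * (u j * Real.exp (-(C i j) / 2)))
              - ∑ j, α j * (v j * Real.exp (-(C i j) / 2)) := Finset.sum_sub_distrib _ _
        _ = (u i)⁻¹ - (v i)⁻¹ := by rw [hu i, hv i]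
    have hQeq : ∑ i, ∑ j, w i * w j * Real.exp (-(C i j) / 2)
        = ∑ i, w i * ((u i)⁻¹ - (v i)⁻¹) := by
      refine Finset.sum_congr rfl fun i _ => ?_
      rw [← hinner i, Finset.mul_sum]
      exact Finset.sum_congr rfl fun j _ => by ring
    have hterm : ∀ i ∈ Finset.univ, w i * ((u i)⁻¹ - (v i)⁻¹) ≤ 0 := by
      intro i _
      rw [hw_def]
      have key : (u i - v i) * ((u i)⁻¹ - (v i)⁻¹) = -((u i - v i) ^ 2 / (u i * v i)) := by
        have hui := (hu0 i).ne'; have hvi := (hv0 i).ne'; field_simp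
        ring
      have h1 : α i * ((u i - v i) * ((u i)⁻¹ - (v i)⁻¹)) ≤ 0 := by
        rw [key]
        refine mul_nonpos_of_nonneg_of_nonpos (hα.1 i) ?_
        refine neg_nonpos_of_nonneg (div_nonneg (sq_nonneg _) ?_)
        exact (mul_pos (hu0 i) (hv0 i)).le
      calc α i * (u i - v i) * ((u i)⁻¹ - (v i)⁻¹)
          = α i * ((u i - v i) * ((u i)⁻¹ - (v i)⁻¹)) := by ring
        _ ≤ 0 := h1
    have hQ0 : ∑ i, ∑ j, w i * w j * Real.exp (-(C i j) / 2) = 0 := by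
      refine le_antisymm ?_ (kquad_nonneg C hK w)
      rw [hQeq]
      exact Finset.sum_nonpos hterm
    have hw0 : w = 0 := by
      by_contra hw
      exact (kquad_pos C hK w hw).ne' hQ0
    have hαuv : ∀ j, α j * u j = α j * v j := by
      intro j
      have := congrFun hw0 j
      rw [hw_def] at this
      simp only [Pi.zero_apply] at this
      nlinarith [this]
    have huv : ∀ i, u i = v i := by
      intro i
      have h1 : (u i)⁻¹ = (v i)⁻¹ := by
        rw [← hu i, ← hv i]
        refine Finset.sum_congr rfl fun j _ => ?_
        rw [← mul_assoc, hαuv j, mul_assoc]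
      exact inv_inj.mp h1
    funext i
    have := huv i
    rw [hu_def, hv_def] at this
    have h2 := Real.exp_eq_exp.mp this.symm
    linarith
  rw [gradOmega, dif_pos hexg]
  exact huniq _ hexg.choose_spec
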